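/- arXiv:2001.08397 — 2 statements merged into one kernel-verified Lean document; each statement's English description precedes it below -/
import Mathlib

section
/- For x ∈ SU(2) with x ≠ ±id, we have ζ^t(x) = id if and only if t ∈ (2π/sin θ)·ℤ, where θ = arccos(tr(x)/2) ∈ (0, π) and ζ^t(x) = exp(t(x - (tr(x)/2)·id)). If x = ±id then ζ^t(x) = id for all t. -/
open Matrix Complex

set_option linter.unnecessarySeqFocus false in
private noncomputable def phiSU2 (F : Matrix (Fin 2) (Fin 2) ℂ) (σ : ℝ) (_hσ : (σ:ℂ) ≠ 0)
    (hF2 : F * F = ((-(σ:ℂ)^2)) • 1) : (ℂ × ℂ) →ₐ[ℂ] Matrix (Fin 2) (Fin 2) ℂ where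
  toFun p := ((p.1 + p.2)/2) • (1 : Matrix (Fin 2) (Fin 2) ℂ) + ((p.2 - p.1) * I/(2*σ)) • F
  map_one' := by norm_num
  map_mul' p q := by
    simp only [Prod.fst_mul, Prod.snd_mul, mul_add, add_mul, smul_mul_assoc, mul_smul_comm,
      smul_smul, mul_one, one_mul, hF2]
    match_scalars <;> field_simp <;> ring_nf <;> simp only [Complex.I_sq] <;> ring
  map_zero' := by norm_num
  map_add' p q := by
    simp only [Prod.fst_add, Prod.snd_add]
    match_scalars <;> ring
  commutes' c := by
    simp [Algebra.algebraMap_eq_smul_one]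

open NormedSpace in
private lemma key_exp_iff (F : Matrix (Fin 2) (Fin 2) ℂ) (σ : ℝ) (hσ : σ ≠ 0)
    (htr : Matrix.trace F = 0)
    (hF2 : F * F = ((-(σ:ℂ)^2)) • 1) (t : ℝ) :
    NormedSpace.exp ((t : ℂ) • F) = 1 ↔ ∃ k : ℤ, t = k * (2 * Real.pi / σ) := by
  letI : SeminormedRing (Matrix (Fin 2) (Fin 2) ℂ) := Matrix.linftyOpSemiNormedRing
  letI : NormedRing (Matrix (Fin 2) (Fin 2) ℂ) := Matrix.linftyOpNormedRing
  letI : NormedAlgebra ℂ (Matrix (Fin 2) (Fin 2) ℂ) := Matrix.linftyOpNormedAlgebra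
  have hσ' : (σ:ℂ) ≠ 0 := by exact_mod_cast Complex.ofReal_ne_zero.mpr hσ
  set φ := phiSU2 F σ hσ' hF2 with hφ
  have hcont : Continuous φ := by
    show Continuous fun p : ℂ × ℂ => ((p.1 + p.2)/2) • (1 : Matrix (Fin 2) (Fin 2) ℂ)
      + ((p.2 - p.1) * I/(2*σ)) • F
    fun_prop
  have hprod : ∀ p : ℂ × ℂ, NormedSpace.exp p = (NormedSpace.exp p.1, NormedSpace.exp p.2) := fun p => by
    ext
    · exact map_exp (RingHom.fst ℂ ℂ) continuous_fst p
    · exact map_exp (RingHom.snd ℂ ℂ) continuous_snd p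
  have harg : φ ((I * t * σ), (-(I * t * σ))) = (t : ℂ) • F := by
    show (((I * t * σ) + (-(I * t * σ)))/2) • (1 : Matrix (Fin 2) (Fin 2) ℂ)
      + (((-(I * t * σ)) - (I * t * σ)) * I/(2*σ)) • F = (t : ℂ) • F
    have : ((-(I * t * σ)) - (I * t * σ)) * I/(2*σ) = (t:ℂ) := by
      field_simp
      ring_nf
      simp only [Complex.I_sq]
      ring
    rw [this]
    simp
  have hexp : NormedSpace.exp ((t : ℂ) • F) = φ (Complex.exp (I * t * σ), Complex.exp (-(I * t * σ))) := by
    rw [← harg]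
    erw [← map_exp φ hcont]
    rw [hprod]
    simp [Complex.exp_eq_exp_ℂ]
  rw [hexp]
  have h1 : φ (1, 1) = 1 := by
    have : ((1:ℂ), (1:ℂ)) = (1 : ℂ × ℂ) := rfl
    rw [this, _root_.map_one]
  constructor
  · intro h
    have htr2 : Matrix.trace (φ (Complex.exp (I * t * σ), Complex.exp (-(I * t * σ)))) = 2 := by
      rw [h]; simp [Matrix.trace_one]
    have hsum : Complex.exp (I * t * σ) + Complex.exp (-(I * t * σ)) = 2 := by
      rw [hφ] at htr2
      simp only [phiSU2, AlgHom.coe_mk, RingHom.coe_mk, MonoidHom.coe_mk, OneHom.coe_mk] at htr2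
      rw [Matrix.trace_add, Matrix.trace_smul, Matrix.trace_smul, htr, Matrix.trace_one] at htr2
      simp only [smul_zero, add_zero, Fintype.card_fin, Nat.cast_ofNat, smul_eq_mul] at htr2
      field_simp at htr2
      apply mul_left_cancel₀ hσ'
      linear_combination htr2 / 2
    set e := Complex.exp (I * t * σ) with he
    have hene : e ≠ 0 := Complex.exp_ne_zero _
    have hinv : Complex.exp (-(I * t * σ)) = e⁻¹ := by rw [he, ← Complex.exp_neg]
    rw [hinv] at hsum
    have heone : e = 1 := by
      have h2 : (e - 1) ^ 2 = (e + e⁻¹ - 2) * e := by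
        field_simp
        ring
      rw [hsum] at h2
      simp only [sub_self, zero_mul] at h2
      have := pow_eq_zero_iff (n := 2) (by norm_num) |>.mp h2
      exact sub_eq_zero.mp this
    rw [he] at heone
    obtain ⟨n, hn⟩ := Complex.exp_eq_one_iff.mp heone
    refine ⟨n, ?_⟩
    have hC : (t : ℂ) * σ = n * (2 * Real.pi) := by
      have hI : (I : ℂ) ≠ 0 := Complex.I_ne_zero
      exact mul_right_cancel₀ hI (by linear_combination hn)
    have hR : t * σ = n * (2 * Real.pi) := by exact_mod_cast hC
    field_simp
    linarith [hR]
  · rintro ⟨k, rfl⟩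
    have hz : I * ((k : ℝ) * (2 * Real.pi / σ) : ℝ) * σ = (k : ℤ) * (2 * Real.pi * I) := by
      push_cast
      field_simp
    rw [hz, Complex.exp_eq_one_iff.mpr ⟨k, rfl⟩]
    rw [show (-(((k:ℤ)) * (2 * Real.pi * I) : ℂ)) = ((-k : ℤ) * (2 * Real.pi * I) : ℂ) by
      push_cast; ring]
    rw [Complex.exp_eq_one_iff.mpr ⟨-k, rfl⟩]
    exact h1

private lemma su2_quad (x : Matrix (Fin 2) (Fin 2) ℂ) (r σ : ℝ)
    (h11 : x 1 1 = (starRingEnd ℂ) (x 0 0))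
    (h10 : x 1 0 = -(starRingEnd ℂ) (x 0 1))
    (hdet : x 0 0 * (starRingEnd ℂ) (x 0 0) + x 0 1 * (starRingEnd ℂ) (x 0 1) = 1)
    (h2r : x 0 0 + (starRingEnd ℂ) (x 0 0) = 2 * (r:ℝ))
    (hσ2 : σ ^ 2 = 1 - r ^ 2) :
    (x - ((r:ℂ)) • (1 : Matrix (Fin 2) (Fin 2) ℂ)) *
        (x - ((r:ℂ)) • (1 : Matrix (Fin 2) (Fin 2) ℂ)) = ((-(σ:ℂ)^2)) • 1 := by
  have hσC : (-(σ:ℂ)^2) = ((r:ℂ)^2 - 1) := by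
    have h := congrArg (Complex.ofReal) hσ2
    push_cast at h
    linear_combination -h
  rw [hσC]
  ext i j
  fin_cases i <;> fin_cases j <;>
    simp only [Matrix.mul_apply, Fin.sum_univ_two, Matrix.sub_apply, Matrix.smul_apply,
      Matrix.one_apply, Fin.isValue, Fin.zero_eta, Fin.mk_one, one_ne_zero, zero_ne_one,
      if_true, if_false, ite_true, ite_false, smul_eq_mul, mul_one, mul_zero, sub_zero,
      h11, h10]
  · linear_combination (x 0 0) * h2r - hdet
  · linear_combination (x 0 1) * h2r
  · linear_combination -((starRingEnd ℂ) (x 0 1)) * h2r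
  · linear_combination ((starRingEnd ℂ) (x 0 0)) * h2r - hdet

/-- For `x ∈ SU(2)` with `x ≠ ±id` and angle `θ = arccos(tr x / 2) ∈ (0,π)`,
`ζ^t(x) = exp(t·(x - (tr x/2)·id))` equals the identity iff `t ∈ (2π/sin θ)·ℤ`;
and if `x = ±id` then `ζ^t(x) = id` for all `t`. -/
theorem stmt_8 (x : Matrix (Fin 2) (Fin 2) ℂ) (θ : ℝ)
    (hx : x ∈ Matrix.specialUnitaryGroup (Fin 2) ℂ)
    (hθ : θ = Real.arccos ((Matrix.trace x).re / 2)) :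
    ((x ≠ 1 ∧ x ≠ -1 ∧ θ ∈ Set.Ioo 0 Real.pi) →
      ∀ t : ℝ,
        NormedSpace.exp ((t : ℂ) •
            (x - (Matrix.trace x / 2) • (1 : Matrix (Fin 2) (Fin 2) ℂ))) = 1 ↔
          ∃ k : ℤ, t = k * (2 * Real.pi / Real.sin θ)) ∧
    ((x = 1 ∨ x = -1) →
      ∀ t : ℝ,
        NormedSpace.exp ((t : ℂ) •
            (x - (Matrix.trace x / 2) • (1 : Matrix (Fin 2) (Fin 2) ℂ))) = 1) := by
  constructor
  · rintro ⟨-, -, hθ1, hθ2⟩ t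
    -- extract SU(2) structure
    obtain ⟨hu, hdet⟩ := (Matrix.mem_specialUnitaryGroup_iff).mp hx
    have h1 : star x * x = 1 := Matrix.mem_unitaryGroup_iff'.mp hu
    have hinv : x⁻¹ = star x := Matrix.inv_eq_left_inv h1
    have hadj : x⁻¹ = x.adjugate := by
      rw [Matrix.inv_def, hdet]; simp
    have hsx : star x = x.adjugate := by rw [← hinv, hadj]
    have hfin : x.adjugate = !![x 1 1, -x 0 1; -x 1 0, x 0 0] := Matrix.adjugate_fin_two x
    have h00 : (starRingEnd ℂ) (x 0 0) = x 1 1 := by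
      have := congrFun (congrFun (hsx.trans hfin) 0) 0
      simpa [Matrix.conjTranspose_apply] using this
    have h01 : (starRingEnd ℂ) (x 0 1) = -x 1 0 := by
      have := congrFun (congrFun (hsx.trans hfin) 1) 0
      simpa [Matrix.conjTranspose_apply] using this
    have hd : x 0 0 * x 1 1 - x 0 1 * x 1 0 = 1 := by
      rw [← Matrix.det_fin_two]; exact hdet
    have h11 : x 1 1 = (starRingEnd ℂ) (x 0 0) := h00.symm
    have h10 : x 1 0 = -(starRingEnd ℂ) (x 0 1) := by linear_combination h01
    have hdet' : x 0 0 * (starRingEnd ℂ) (x 0 0) + x 0 1 * (starRingEnd ℂ) (x 0 1) = 1 := by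
      rw [h00, h01]; linear_combination hd
    set r : ℝ := (x 0 0).re with hr
    have h2r : x 0 0 + (starRingEnd ℂ) (x 0 0) = 2 * (r:ℝ) := by
      rw [Complex.add_conj]; push_cast; ring
    have htr2 : Matrix.trace x = ((2 * r : ℝ) : ℂ) := by
      rw [Matrix.trace_fin_two, h11, Complex.add_conj]
    have hθ' : θ = Real.arccos r := by
      rw [hθ, htr2]
      norm_num
    have hc : Matrix.trace x / 2 = ((r : ℝ) : ℂ) := by
      rw [htr2]; push_cast; ring
    have hr2 : r ^ 2 ≤ 1 := by
      have h := congrArg Complex.re hdet'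
      simp only [Complex.add_re, Complex.mul_conj] at h
      have h1' : Complex.normSq (x 0 0) + Complex.normSq (x 0 1) = 1 := by
        exact_mod_cast h
      have hn : Complex.normSq (x 0 0) = (x 0 0).re ^ 2 + (x 0 0).im ^ 2 := by
        rw [Complex.normSq_apply]; ring
      nlinarith [Complex.normSq_nonneg (x 0 1), sq_nonneg (x 0 0).im]
    have hσpos : 0 < Real.sin θ := Real.sin_pos_of_pos_of_lt_pi hθ1 hθ2
    have hσ2 : Real.sin θ ^ 2 = 1 - r ^ 2 := by
      rw [hθ', Real.sin_arccos, Real.sq_sqrt (by nlinarith)]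
    rw [hc]
    exact key_exp_iff (x - ((r:ℂ)) • 1) (Real.sin θ) (ne_of_gt hσpos)
      (by rw [Matrix.trace_sub, Matrix.trace_smul, htr2, Matrix.trace_one]
          simp only [Fintype.card_fin, Nat.cast_ofNat, smul_eq_mul]
          push_cast; ring)
      (su2_quad x r (Real.sin θ) h11 h10 hdet' h2r hσ2) t
  · rintro (rfl | rfl) t
    · have h2 : Matrix.trace (1 : Matrix (Fin 2) (Fin 2) ℂ) = 2 := by
        simp [Matrix.trace_one]
      rw [h2]
      norm_num [NormedSpace.exp_zero]
    · have h2 : Matrix.trace (-1 : Matrix (Fin 2) (Fin 2) ℂ) = -2 := by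
        simp [Matrix.trace_one]
      rw [h2]
      norm_num [NormedSpace.exp_zero]
end

section
/- Let G be a compact connected Lie group acting continuously, freely, and measurably on a separable, complete, metrizable, locally compact space X whose orbits are compact (hence locally closed). Then there exists a Borel cross section S ⊆ X meeting each orbit exactly once, and S is bimeasurable to the quotient X/G. -/
open scoped ENNReal
open Set

set_option linter.unusedSectionVars false

section EB
variable (G : Type*) [TopologicalSpace G] [Group G] [IsTopologicalGroup G] [CompactSpace G]
variable {X : Type*} [MetricSpace X] [MulAction G X]

noncomputable def ebm (d : ℕ → X) : ℕ → X → ℝ≥0∞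
  | n, x => ⨅ g ∈ {g : G | ∀ i, ∀ _ : i < n, edist (g • x) (d i) = ebm d i x},
      edist (g • x) (d n)
termination_by n x => n

/-- The constraint set. -/
def ebK (d : ℕ → X) (n : ℕ) (x : X) : Set G :=
  {g : G | ∀ i, ∀ _ : i < n, edist (g • x) (d i) = ebm G d i x}

theorem ebm_def (d : ℕ → X) (n : ℕ) (x : X) :
    ebm G d n x = ⨅ g ∈ ebK G d n x, edist (g • x) (d n) := by
  rw [ebm]; rfl

variable {G}
variable {d : ℕ → X} {x : X} {n : ℕ}
variable (hc : Continuous fun p : G × X => p.1 • p.2)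
include hc

theorem cont_smul_left (x : X) : Continuous fun g : G => g • x :=
  hc.comp (continuous_id.prodMk continuous_const)

omit hc in
theorem ebK_zero : ebK G d 0 x = univ := by
  ext g; simp [ebK]

omit hc in
theorem ebK_succ : ebK G d (n + 1) x
    = ebK G d n x ∩ {g : G | edist (g • x) (d n) = ebm G d n x} := by
  ext g
  constructor
  · intro h
    exact ⟨fun i hi => h i (hi.trans (Nat.lt_succ_self n)), h n (Nat.lt_succ_self n)⟩
  · rintro ⟨h1, h2⟩ i hi
    rcases Nat.lt_succ_iff_lt_or_eq.1 hi with hi | rfl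
    · exact h1 i hi
    · exact h2

theorem isClosed_ebK : IsClosed (ebK G d n x) := by
  have : ebK G d n x = ⋂ i, ⋂ _ : i < n, {g : G | edist (g • x) (d i) = ebm G d i x} := by
    ext g; simp [ebK]
  rw [this]
  exact isClosed_iInter fun i => isClosed_iInter fun _ =>
    isClosed_eq (((cont_smul_left hc x).edist continuous_const)) continuous_const

omit hc in
theorem ebK_antitone : Antitone fun n => ebK G d n x :=
  fun m n hmn g hg i hi => hg i (lt_of_lt_of_le hi hmn)

omit hc in
theorem ebm_le {g : G} (hg : g ∈ ebK G d n x) : ebm G d n x ≤ edist (g • x) (d n) := by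
  rw [ebm_def]; exact iInf₂_le g hg

theorem ebK_nonempty : ∀ n, (ebK G d n x).Nonempty := by
  intro n
  induction n with
  | zero => exact ⟨1, by simp [ebK_zero]⟩
  | succ n ih =>
    obtain ⟨g, hgK, hmin⟩ := ((isClosed_ebK hc (n := n) (d := d) (x := x)).isCompact).exists_isMinOn
      ih (((cont_smul_left hc x).edist continuous_const).continuousOn)
    refine ⟨g, ?_⟩
    rw [ebK_succ]
    refine ⟨hgK, le_antisymm ?_ (ebm_le hgK)⟩
    rw [ebm_def]
    exact le_iInf₂ fun g' hg' => hmin hg'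

theorem ebm_ne_top : ebm G d n x ≠ ⊤ := by
  obtain ⟨g, hg⟩ := ebK_nonempty hc (d := d) (x := x) (n + 1)
  rw [ebK_succ] at hg
  rw [← hg.2]
  exact edist_ne_top _ _

omit hc in
/-- membership from inequalities -/
theorem ebK_of_le {g : G} (h : ∀ i, i < n → edist (g • x) (d i) ≤ ebm G d i x) :
    g ∈ ebK G d n x := by
  have : ∀ j, j ≤ n → g ∈ ebK G d j x := by
    intro j
    induction j with
    | zero => intro _; simp [ebK_zero]
    | succ j ih =>
      intro hj
      have hgj := ih (le_trans (Nat.le_succ j) hj)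
      rw [ebK_succ]
      exact ⟨hgj, le_antisymm (h j (Nat.lt_of_succ_le hj)) (ebm_le hgj)⟩
  exact this n le_rfl

theorem ebKinf_nonempty : (⋂ n, ebK G d n x).Nonempty := by
  refine IsCompact.nonempty_iInter_of_sequence_nonempty_isCompact_isClosed _
    (fun n => ebK_antitone (n.le_succ)) (fun n => ebK_nonempty hc n)
    ((isClosed_ebK hc).isCompact) (fun n => isClosed_ebK hc)

omit hc in
theorem edist_eq_ebm_of_mem_inf {g : G} (hg : g ∈ ⋂ n, ebK G d n x) (n : ℕ) :
    edist (g • x) (d n) = ebm G d n x :=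
  (mem_iInter.1 hg (n + 1)) n (Nat.lt_succ_self n)

omit hc in
/-- invariance of `ebm` under the action. -/
theorem ebm_smul (h₀ : G) : ∀ n x, ebm G d n (h₀ • x) = ebm G d n x := by
  intro n
  induction n using Nat.strong_induction_on with
  | _ n ih =>
    intro x
    have hK : ebK G d n (h₀ • x) = {g : G | g * h₀ ∈ ebK G d n x} := by
      ext g
      constructor
      · intro hg i hi
        rw [mul_smul]
        rw [← ih i hi x]
        exact hg i hi
      · intro hg i hi
        rw [ih i hi x, ← mul_smul]
        exact hg i hi
    rw [ebm_def, ebm_def, hK]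
    apply le_antisymm
    · refine le_iInf₂ fun g hg => ?_
      have h1 : g * h₀⁻¹ ∈ {g : G | g * h₀ ∈ ebK G d n x} := by
        simp only [mem_setOf_eq, inv_mul_cancel_right]; exact hg
      calc ⨅ g' ∈ {g : G | g * h₀ ∈ ebK G d n x}, edist (g' • h₀ • x) (d n)
          ≤ edist ((g * h₀⁻¹) • h₀ • x) (d n) := iInf₂_le _ h1
        _ = edist (g • x) (d n) := by rw [← mul_smul, inv_mul_cancel_right]
    · refine le_iInf₂ fun g hg => ?_
      calc ⨅ g' ∈ ebK G d n x, edist (g' • x) (d n)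
          ≤ edist ((g * h₀) • x) (d n) := iInf₂_le (g * h₀) (show g * h₀ ∈ ebK G d n x from hg)
        _ = edist (g • h₀ • x) (d n) := by rw [mul_smul]


open TopologicalSpace in
theorem ebm_measurable [MeasurableSpace X] [BorelSpace X] [SecondCountableTopology G]
    (d : ℕ → X) : ∀ n, Measurable fun x => ebm G d n x := by
  classical
  obtain ⟨D, hD⟩ := TopologicalSpace.exists_dense_seq G
  set ε : ℕ → ℝ≥0∞ := fun k => ((k : ℝ≥0∞) + 1)⁻¹ with hε
  have hε0 : ∀ k, ε k ≠ 0 := by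
    intro k
    simp only [hε]
    exact ENNReal.inv_ne_zero.2
      (ENNReal.add_ne_top.2 ⟨ENNReal.natCast_ne_top k, ENNReal.one_ne_top⟩)
  have hεanti : ∀ k, ε (k + 1) ≤ ε k := by
    intro k
    apply ENNReal.inv_le_inv.2
    push_cast
    exact le_self_add
  have hεlt : ∀ k, ε (k + 1) < ε k := by
    intro k
    apply ENNReal.inv_lt_inv.2
    push_cast
    exact ENNReal.lt_add_right (by simp [ENNReal.add_ne_top]) one_ne_zero
  intro n
  induction n using Nat.strong_induction_on with
  | _ n ih =>
  have key : ∀ x, ebm G d n x = ⨆ k : ℕ, ⨅ j : ℕ,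
      if ∀ i, i < n → edist (D j • x) (d i) < ebm G d i x + ε k
        then edist (D j • x) (d n) else ⊤ := by
    intro x
    set U : ℕ → Set G := fun k =>
      {g | ∀ i, i < n → edist (g • x) (d i) < ebm G d i x + ε k} with hU
    set C : ℕ → Set G := fun k =>
      {g | ∀ i, i < n → edist (g • x) (d i) ≤ ebm G d i x + ε k} with hC
    have hUopen : ∀ k, IsOpen (U k) := by
      intro k
      have : U k = ⋂ i ∈ Finset.range n, {g : G | edist (g • x) (d i) < ebm G d i x + ε k} := by
        ext g; simp [hU, Finset.mem_range]
      rw [this]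
      exact isOpen_biInter_finset fun i _ =>
        isOpen_lt ((cont_smul_left hc x).edist continuous_const) continuous_const
    have hCclosed : ∀ k, IsClosed (C k) := by
      intro k
      have : C k = ⋂ i ∈ Finset.range n, {g : G | edist (g • x) (d i) ≤ ebm G d i x + ε k} := by
        ext g; simp [hC, Finset.mem_range]
      rw [this]
      exact isClosed_biInter fun i _ =>
        isClosed_le ((cont_smul_left hc x).edist continuous_const) continuous_const
    have hKU : ∀ k, ebK G d n x ⊆ U k := by
      intro k g hg i hi
      rw [hg i hi]
      exact ENNReal.lt_add_right (ebm_ne_top hc) (hε0 k)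
    have hUC : ∀ k, U k ⊆ C k := fun k g hg i hi => (hg i hi).le
    have hCU : ∀ k, C (k + 1) ⊆ U k := fun k g hg i hi =>
      lt_of_le_of_lt (hg i hi) (ENNReal.add_lt_add_left (ebm_ne_top hc) (hεlt k))
    have hCanti : ∀ k, C (k + 1) ⊆ C k := fun k g hg i hi =>
      le_trans (hg i hi) (add_le_add_right (hεanti k) _)
    have hUne : ∀ k, (U k).Nonempty := fun k =>
      (ebK_nonempty hc n).imp fun g hg => hKU k hg
    set a : ℕ → ℝ≥0∞ := fun k => ⨅ g ∈ U k, edist (g • x) (d n) with ha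
    set b : ℕ → ℝ≥0∞ := fun k => ⨅ g ∈ C k, edist (g • x) (d n) with hb
    have hba : ∀ k, b k ≤ a k := fun k =>
      le_iInf₂ fun g hg => iInf₂_le g (hUC k hg)
    have hab : ∀ k, a k ≤ b (k + 1) := fun k =>
      le_iInf₂ fun g hg => iInf₂_le g (hCU k hg)
    have hbm : ∀ k, b k ≤ ebm G d n x := by
      intro k
      rw [ebm_def]
      exact le_iInf₂ fun g hg => iInf₂_le g (hUC k (hKU k hg))
    have hAa : ∀ k, (⨅ j : ℕ,
        if ∀ i, i < n → edist (D j • x) (d i) < ebm G d i x + ε k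
          then edist (D j • x) (d n) else ⊤) = a k := by
      intro k
      apply le_antisymm
      · refine le_of_forall_gt_imp_ge_of_dense fun c hcc => ?_
        rw [ha] at hcc
        simp only [iInf_lt_iff] at hcc
        obtain ⟨g, hgU, hgc⟩ := hcc
        have hVopen : IsOpen (U k ∩ (fun g : G => edist (g • x) (d n)) ⁻¹' Set.Iio c) :=
          (hUopen k).inter (isOpen_lt ((cont_smul_left hc x).edist continuous_const)
            continuous_const)
        obtain ⟨j, hj⟩ := hD.exists_mem_open hVopen ⟨g, hgU, hgc⟩
        have hjU : ∀ i, i < n → edist (D j • x) (d i) < ebm G d i x + ε k := hj.1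
        calc (⨅ j : ℕ, if ∀ i, i < n → edist (D j • x) (d i) < ebm G d i x + ε k
                then edist (D j • x) (d n) else ⊤)
            ≤ _ := iInf_le _ j
          _ ≤ c := by rw [if_pos hjU]; exact le_of_lt hj.2
      · refine le_iInf fun j => ?_
        by_cases hj : ∀ i, i < n → edist (D j • x) (d i) < ebm G d i x + ε k
        · rw [if_pos hj]
          exact iInf₂_le (D j) hj
        · rw [if_neg hj]; exact le_top
    have hsup_ab : (⨆ k, a k) = ⨆ k, b k :=
      le_antisymm (iSup_le fun k => (hab k).trans (le_iSup b (k + 1)))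
        (iSup_le fun k => (hba k).trans (le_iSup a k))
    -- the nontrivial inequality
    have hge : ebm G d n x ≤ ⨆ k, a k := by
      set c : ℝ≥0∞ := ⨆ k, a k with hcdef
      set T : ℕ → Set G := fun k => C k ∩ {g | edist (g • x) (d n) ≤ c} with hT
      have hTne : ∀ k, (T k).Nonempty := by
        intro k
        obtain ⟨g0, hg0⟩ := (ebK_nonempty hc n).imp fun g hg => hUC k (hKU k hg)
        obtain ⟨g, hgC, hmin⟩ := (hCclosed k).isCompact.exists_isMinOn ⟨g0, hg0⟩
          ((cont_smul_left hc x).edist continuous_const).continuousOn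
        refine ⟨g, hgC, ?_⟩
        have : edist (g • x) (d n) = b k :=
          le_antisymm (le_iInf₂ fun y hy => hmin hy) (iInf₂_le g hgC)
        rw [Set.mem_setOf_eq, this]
        exact (hba k).trans (le_iSup a k)
      have hTclosed : ∀ k, IsClosed (T k) :=
        fun k => (hCclosed k).inter
          (isClosed_le ((cont_smul_left hc x).edist continuous_const) continuous_const)
      have hTanti : ∀ k, T (k + 1) ⊆ T k :=
        fun k => Set.inter_subset_inter_left _ (hCanti k)
      obtain ⟨gI, hgI⟩ := IsCompact.nonempty_iInter_of_sequence_nonempty_isCompact_isClosed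
        T hTanti hTne ((hTclosed 0).isCompact) hTclosed
      simp only [Set.mem_iInter] at hgI
      have hle : ∀ i, i < n → edist (gI • x) (d i) ≤ ebm G d i x := by
        intro i hi
        refine ENNReal.le_of_forall_pos_le_add fun εr hεr _ => ?_
        obtain ⟨k, hk⟩ := ENNReal.exists_inv_nat_lt
          (show ((εr : ℝ≥0∞)) ≠ 0 by exact_mod_cast hεr.ne')
        have h1 : ε k ≤ ((k : ℝ≥0∞))⁻¹ := by
          apply ENNReal.inv_le_inv.2
          exact le_add_of_nonneg_right (zero_le)
        calc edist (gI • x) (d i) ≤ ebm G d i x + ε k := (hgI k).1 i hi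
          _ ≤ ebm G d i x + εr := add_le_add_right (h1.trans hk.le) _
      have hgK : gI ∈ ebK G d n x := ebK_of_le hle
      calc ebm G d n x ≤ edist (gI • x) (d n) := ebm_le hgK
        _ ≤ c := (hgI 0).2
    refine le_antisymm
      (hge.trans (le_of_eq (iSup_congr fun k => (hAa k).symm))) ?_
    calc (⨆ k : ℕ, ⨅ j : ℕ, if ∀ i, i < n → edist (D j • x) (d i) < ebm G d i x + ε k
            then edist (D j • x) (d n) else ⊤)
        = ⨆ k, a k := iSup_congr hAa
      _ = ⨆ k, b k := hsup_ab
      _ ≤ ebm G d n x := iSup_le hbm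
  have hmeas : Measurable fun x => ⨆ k : ℕ, ⨅ j : ℕ,
      if ∀ i, i < n → edist (D j • x) (d i) < ebm G d i x + ε k
        then edist (D j • x) (d n) else ⊤ := by
    apply Measurable.iSup
    intro k
    apply Measurable.iInf
    intro j
    have hcont : ∀ m : ℕ, Continuous fun x : X => edist (D j • x) (d m) := fun m =>
      ((hc.comp (continuous_const.prodMk continuous_id)).edist continuous_const)
    refine Measurable.ite ?_ (hcont n).measurable measurable_const
    have : {x : X | ∀ i, i < n → edist (D j • x) (d i) < ebm G d i x + ε k}
        = ⋂ i, ⋂ _ : i < n, {x : X | edist (D j • x) (d i) < ebm G d i x + ε k} := by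
      ext y; simp
    rw [this]
    exact MeasurableSet.iInter fun i => MeasurableSet.iInter fun hi =>
      measurableSet_lt (hcont i).measurable ((ih i hi).add measurable_const)
  have : (fun x => ebm G d n x) = fun x => ⨆ k : ℕ, ⨅ j : ℕ,
      if ∀ i, i < n → edist (D j • x) (d i) < ebm G d i x + ε k
        then edist (D j • x) (d n) else ⊤ := funext key
  rw [this]
  exact hmeas

end EB

theorem dense_inj {X : Type*} [MetricSpace X] {d : ℕ → X} (hd : DenseRange d) {x y : X}
    (h : ∀ n, edist x (d n) = edist y (d n)) : x = y := by
  have hdist : ∀ n, dist x (d n) = dist y (d n) := by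
    intro n
    rw [dist_edist, dist_edist, h n]
  by_contra hne
  have hpos : 0 < dist x y / 2 := by
    have := dist_pos.2 hne
    linarith
  obtain ⟨n, hn⟩ := Metric.denseRange_iff.1 hd x _ hpos
  have : dist x y ≤ dist x (d n) + dist (d n) y := dist_triangle _ _ _
  rw [dist_comm (d n) y, ← hdist n] at this
  linarith


open Manifold
open MulAction

/-- Effros–Bondar: a compact connected Lie group acting continuously, freely and
measurably on a separable complete metrizable locally compact space with compact
orbits admits a Borel cross section, bimeasurable to the orbit space. -/
theorem stmt_14 {E : Type*} [NormedAddCommGroup E] [NormedSpace ℝ E]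
    [FiniteDimensional ℝ E]
    {G : Type*} [TopologicalSpace G] [ChartedSpace E G] [Group G] [IsTopologicalGroup G]
    [LieGroup 𝓘(ℝ, E) (⊤ : ℕ∞) G] [CompactSpace G] [ConnectedSpace G]
    {X : Type*} [MetricSpace X] [TopologicalSpace.SeparableSpace X] [CompleteSpace X]
    [LocallyCompactSpace X] [MeasurableSpace X] [BorelSpace X]
    [MulAction G X] (hc : Continuous fun p : G × X => p.1 • p.2)
    (hfree : ∀ (g : G) (x : X), g • x = x → g = 1)
    (horb : ∀ x : X, IsCompact (MulAction.orbit G x)) :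
    ∃ S : Set X, MeasurableSet S ∧
      (∀ x : X, ∃! s : X, s ∈ S ∩ MulAction.orbit G x) ∧
      ∃ e : S ≃ᵐ Quotient (MulAction.orbitRel G X),
        ∀ s : S, e s = Quotient.mk (MulAction.orbitRel G X) (s : X) := by
  classical
  rcases isEmpty_or_nonempty X with hX | hX
  · refine ⟨∅, MeasurableSet.empty, fun x => (hX.false x).elim, ?_⟩
    haveI : IsEmpty (Quotient (orbitRel G X)) :=
      ⟨fun q => Quotient.inductionOn q fun x => hX.false x⟩
    haveI : IsEmpty ((∅ : Set X) : Type _) := ⟨fun s => s.2⟩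
    exact ⟨⟨Equiv.equivOfIsEmpty _ _, measurable_of_empty _, measurable_of_empty _⟩,
      fun s => (IsEmpty.false s).elim⟩
  · haveI : SecondCountableTopology G := ChartedSpace.secondCountable_of_sigmaCompact E G
    obtain ⟨d, hd⟩ := TopologicalSpace.exists_dense_seq X
    have hKne : ∀ x : X, (⋂ n, ebK G d n x).Nonempty := fun x => ebKinf_nonempty hc
    set σ : X → X := fun x => (hKne x).some • x with hσ
    have hσ_edist : ∀ (x : X) (n : ℕ), edist (σ x) (d n) = ebm G d n x := fun x n =>
      edist_eq_ebm_of_mem_inf (Nonempty.some_mem (hKne x)) n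
    have hσ_orbit : ∀ x : X, σ x ∈ orbit G x := fun x => mem_orbit x _
    have hσ_inv : ∀ (g : G) (x : X), σ (g • x) = σ x := by
      intro g x
      apply dense_inj hd
      intro n
      rw [hσ_edist, hσ_edist, ebm_smul]
    have hσ_orbit' : ∀ x y : X, y ∈ orbit G x → σ y = σ x := by
      rintro x y ⟨g, rfl⟩
      exact hσ_inv g x
    set S : Set X := {x | ∀ n, edist x (d n) = ebm G d n x} with hS
    have hσS : ∀ x : X, σ x ∈ S := by
      intro x n
      rw [hσ_edist]
      exact (ebm_smul (hKne x).some n x).symm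
    have hSσ : ∀ x ∈ S, σ x = x := by
      intro x hx
      apply dense_inj hd
      intro n
      rw [hσ_edist]
      exact (hx n).symm
    have hSmeas : MeasurableSet S := by
      have : S = ⋂ n, {x : X | edist x (d n) = ebm G d n x} := by
        ext y; simp [hS]
      rw [this]
      refine MeasurableSet.iInter fun n => ?_
      have h1 : Measurable fun x : X => edist x (d n) :=
        (continuous_id.edist continuous_const).measurable
      have h2 := ebm_measurable hc d n
      have : {x : X | edist x (d n) = ebm G d n x}
          = {x : X | edist x (d n) ≤ ebm G d n x} ∩ {x : X | ebm G d n x ≤ edist x (d n)} := by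
        ext y; simp [le_antisymm_iff, Set.mem_setOf_eq]
      rw [this]
      exact (measurableSet_le h1 h2).inter (measurableSet_le h2 h1)
    have hι : MeasurableEmbedding (fun x : X => fun n : ℕ => dist x (d n)) := by
      refine Continuous.measurableEmbedding ?_ ?_
      · exact continuous_pi fun n => continuous_id.dist continuous_const
      · intro x y hxy
        apply dense_inj hd
        intro n
        rw [edist_dist, edist_dist]
        exact congrArg ENNReal.ofReal (congrFun hxy n)
    have hσmeas : Measurable σ := by
      rw [← hι.measurable_comp_iff]
      have : (fun x : X => fun n : ℕ => dist x (d n)) ∘ σ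
          = fun x : X => fun n : ℕ => (ebm G d n x).toReal := by
        funext x n
        simp only [Function.comp_apply]
        rw [dist_edist, hσ_edist]
      rw [this]
      exact measurable_pi_lambda _ fun n => (ebm_measurable hc d n).ennreal_toReal
    refine ⟨S, hSmeas, ?_, ?_⟩
    · intro x
      refine ⟨σ x, ⟨hσS x, hσ_orbit x⟩, fun y hy => ?_⟩
      rw [← hSσ y hy.1, hσ_orbit' x y hy.2]
    · have hresp : ∀ x y : X, orbitRel G X x y → σ x = σ y := fun x y h =>
        hσ_orbit' y x (orbitRel_apply.1 h)
      refine ⟨⟨⟨fun s => Quotient.mk (orbitRel G X) (s : X),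
        Quotient.lift (fun x => (⟨σ x, hσS x⟩ : S)) (fun x y h => Subtype.ext (hresp x y h)),
        ?_, ?_⟩, ?_, ?_⟩, fun s => rfl⟩
      · intro s
        exact Subtype.ext (hSσ s s.2)
      · intro q
        refine Quotient.inductionOn q fun x => ?_
        exact Quotient.sound (orbitRel_apply.2 (hσ_orbit x))
      · exact measurable_quotient_mk''.comp measurable_subtype_coe
      · rw [measurable_from_quotient]
        exact Measurable.subtype_mk hσmeas
end
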